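/- Existence of the radius of weak stabilization: let P ⊂ R^d be a point set without accumulation points and Q a finite set centered in B(z,L). For each pair 0 ≤ r ≤ s < ∞ there exists a finite R such that for all a ≥ R and all 0 ≤ q ≤ d−1, both dim Z_q(K'_{r,a}) − dim Z_q(K_{r,a}) and dim(Z_q(K'_{r,a}) ∩ B_q(K'_{s,a})) − dim(Z_q(K_{r,a}) ∩ B_q(K_{s,a})) are constant in a, where K_{u,a} = K_u(P ∩ B(z,a)) and K'_{u,a} = K_u((P ∪ Q) ∩ B(z,a)) for the Čech or Rips filtration. -/
import Mathlib

set_option autoImplicit false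

open Submodule

/-- An abstract simplicial complex on vertex type `V`: a collection of finite nonempty
subsets closed under taking nonempty subsets. -/
def IsComplex {V : Type*} (K : Set (Finset V)) : Prop :=
  ∀ σ ∈ K, σ.Nonempty ∧ ∀ τ : Finset V, τ ⊆ σ → τ.Nonempty → τ ∈ K

/-- The space of all `F₂`-chains on the vertex type `V`: the free `F₂`-vector space on
all finite subsets of `V`. -/
abbrev Chain (V : Type*) := Finset V →₀ ZMod 2

/-- The boundary map with `F₂`-coefficients, sending a simplex to the sum of its
codimension-one faces. -/
noncomputable def bdry (V : Type*) : Chain V →ₗ[ZMod 2] Chain V := by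
  classical
  exact Finsupp.lsum (ZMod 2) fun σ =>
    LinearMap.toSpanSingleton (ZMod 2) (Chain V) (∑ x ∈ σ, Finsupp.single (σ.erase x) 1)

/-- `C_q(K)`: the chain group of a complex `K`, the `F₂`-span of its `q`-simplices,
viewed as a subspace of the free `F₂`-vector space on all finite vertex sets. -/
noncomputable def chainGroup {V : Type*} (K : Set (Finset V)) (q : ℕ) :
    Submodule (ZMod 2) (Chain V) :=
  Submodule.span (ZMod 2)
    {c | ∃ σ ∈ K, σ.card = q + 1 ∧ c = Finsupp.single σ (1 : ZMod 2)}

/-- `Z_q(K)`: the cycle group of a complex `K`. -/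
noncomputable def cycleGroup {V : Type*} (K : Set (Finset V)) (q : ℕ) :
    Submodule (ZMod 2) (Chain V) :=
  chainGroup K q ⊓ LinearMap.ker (bdry V)

/-- `B_q(K)`: the boundary group of a complex `K`. -/
noncomputable def boundaryGroup {V : Type*} (K : Set (Finset V)) (q : ℕ) :
    Submodule (ZMod 2) (Chain V) :=
  Submodule.map (bdry V) (chainGroup K (q + 1))

/-- The `(r,s)`-persistent Betti number of a filtration
`Kf`: `dim (Z_q(K_r) / (Z_q(K_r) ∩ B_q(K_s)))`. -/
noncomputable def pBetti {V : Type*} (Kf : ℝ → Set (Finset V)) (q : ℕ) (r s : ℝ) : ℕ :=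
  Module.finrank (ZMod 2)
    (↥(cycleGroup (Kf r) q) ⧸
      (Submodule.comap (cycleGroup (Kf r) q).subtype (boundaryGroup (Kf s) q) :
        Submodule (ZMod 2) ↥(cycleGroup (Kf r) q)))

/-- Points of `ℝ^d`. -/
abbrev Pt (d : ℕ) := EuclideanSpace ℝ (Fin d)

/-- The Čech complex at scale `r` of a set `S ⊆ ℝ^d`: all finite nonempty `σ ⊆ S` whose
closed `r`-balls have a common point. -/
def cechCx (d : ℕ) (r : ℝ) (S : Set (Pt d)) : Set (Finset (Pt d)) :=
  {σ | ↑σ ⊆ S ∧ σ.Nonempty ∧ (⋂ x ∈ (σ : Set (Pt d)), Metric.closedBall x r).Nonempty}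

/-- The Vietoris–Rips complex at scale `r` of a set `S ⊆ ℝ^d`: all finite nonempty
`σ ⊆ S` of diameter at most `r`. -/
def ripsCx (d : ℕ) (r : ℝ) (S : Set (Pt d)) : Set (Finset (Pt d)) :=
  {σ | ↑σ ⊆ S ∧ σ.Nonempty ∧ Metric.diam (σ : Set (Pt d)) ≤ r}

/-- The `(r,s)`-persistent Betti number of the filtration `Kx` (Čech or Rips) built on the
point set `S ⊆ ℝ^d`. -/
noncomputable def pBettiPts {d : ℕ} (Kx : ℝ → Set (Pt d) → Set (Finset (Pt d)))
    (q : ℕ) (r s : ℝ) (S : Set (Pt d)) : ℕ :=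
  pBetti (fun t => Kx t S) q r s

section AuxChain

variable {V : Type*}

lemma chainGroup_eq_supported (K : Set (Finset V)) (q : ℕ) :
    chainGroup K q
      = Finsupp.supported (ZMod 2) (ZMod 2) {σ : Finset V | σ ∈ K ∧ σ.card = q + 1} := by
  rw [Finsupp.supported_eq_span_single, chainGroup]
  congr 1
  ext c
  constructor
  · rintro ⟨σ, hσ, hcard, rfl⟩
    exact ⟨σ, ⟨hσ, hcard⟩, rfl⟩
  · rintro ⟨σ, ⟨hσ, hcard⟩, rfl⟩
    exact ⟨σ, hσ, hcard, rfl⟩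

lemma supported_inf_supported (s t : Set (Finset V)) :
    Finsupp.supported (ZMod 2) (ZMod 2) s ⊓ Finsupp.supported (ZMod 2) (ZMod 2) t
      = Finsupp.supported (ZMod 2) (ZMod 2) (s ∩ t) := by
  ext c
  simp only [Submodule.mem_inf, Finsupp.mem_supported, Set.subset_inter_iff]

lemma chainGroup_union (K K' : Set (Finset V)) (q : ℕ) :
    chainGroup (K ∪ K') q = chainGroup K q ⊔ chainGroup K' q := by
  rw [chainGroup_eq_supported, chainGroup_eq_supported, chainGroup_eq_supported,
    ← Finsupp.supported_union]
  congr 1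
  ext σ
  simp only [Set.mem_setOf_eq, Set.mem_union]
  tauto

lemma chainGroup_mono {K K' : Set (Finset V)} (h : K ⊆ K') (q : ℕ) :
    chainGroup K q ≤ chainGroup K' q := by
  rw [chainGroup_eq_supported, chainGroup_eq_supported]
  exact Finsupp.supported_mono (fun σ hσ => ⟨h hσ.1, hσ.2⟩)

lemma finite_finsets {T : Set V} (hT : T.Finite) : {σ : Finset V | ↑σ ⊆ T}.Finite := by
  classical
  apply Set.Finite.subset (hT.toFinset.powerset : Finset (Finset V)).finite_toSet
  intro σ hσ
  simp only [Finset.mem_coe, Finset.mem_powerset]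
  intro x hx
  exact hT.mem_toFinset.2 (hσ (Finset.mem_coe.mpr hx))

lemma fd_supported {s : Set (Finset V)} (hs : s.Finite) :
    FiniteDimensional (ZMod 2) (Finsupp.supported (ZMod 2) (ZMod 2) s) := by
  rw [Finsupp.supported_eq_span_single]
  exact FiniteDimensional.span_of_finite _ (hs.image _)

lemma fd_chainGroup {T : Set V} (hT : T.Finite) {K : Set (Finset V)}
    (hK : ∀ σ ∈ K, ↑σ ⊆ T) (q : ℕ) : FiniteDimensional (ZMod 2) (chainGroup K q) := by
  have h1 : chainGroup K q
      ≤ Finsupp.supported (ZMod 2) (ZMod 2) {σ : Finset V | ↑σ ⊆ T} := by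
    rw [chainGroup_eq_supported]
    exact Finsupp.supported_mono (fun σ hσ => hK σ hσ.1)
  haveI := fd_supported (V := V) (finite_finsets hT)
  exact Submodule.finiteDimensional_of_le h1

end AuxChain

/-- A monotone family of submodules contained in a fixed finite-dimensional submodule is
eventually constant. -/
lemma stab_submodule {M : Type*} [AddCommGroup M] [Module (ZMod 2) M]
    (F : Submodule (ZMod 2) M) (hF : FiniteDimensional (ZMod 2) F)
    (g : ℝ → Submodule (ZMod 2) M) (hmono : ∀ a b : ℝ, a ≤ b → g a ≤ g b)
    (hle : ∀ a : ℝ, g a ≤ F) (c : ℝ) :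
    ∃ R : ℝ, c ≤ R ∧ ∀ a : ℝ, R ≤ a → g a = g R := by
  haveI := hF
  haveI : ∀ a, FiniteDimensional (ZMod 2) (g a) :=
    fun a => Submodule.finiteDimensional_of_le (hle a)
  have hbd : ∀ a, Module.finrank (ZMod 2) (g a) ≤ Module.finrank (ZMod 2) F :=
    fun a => Submodule.finrank_mono (hle a)
  set S : Set ℕ := (fun a => Module.finrank (ZMod 2) (g a)) '' Set.Ici c with hS
  have hne : S.Nonempty := ⟨_, ⟨c, le_refl c, rfl⟩⟩
  have hbdd : BddAbove S := ⟨Module.finrank (ZMod 2) F, by rintro n ⟨a, -, rfl⟩; exact hbd a⟩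
  obtain ⟨R, hRc, hR⟩ : ∃ R, c ≤ R ∧ Module.finrank (ZMod 2) (g R) = sSup S := by
    obtain ⟨a, ha, hae⟩ := Nat.sSup_mem hne hbdd
    exact ⟨a, ha, hae⟩
  refine ⟨R, hRc, fun a ha => ?_⟩
  have h1 : g R ≤ g a := hmono R a ha
  have h2 : Module.finrank (ZMod 2) (g a) ≤ Module.finrank (ZMod 2) (g R) := by
    rw [hR]
    exact le_csSup hbdd ⟨a, hRc.trans ha, rfl⟩
  exact (Submodule.eq_of_le_of_finrank_le h1 h2).symm

/-- Abstract form of the weak stabilization argument: given monotone families of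
finite-dimensional submodules `ZP ≤ ZQ` (cycles) and `BP ≤ BQ` (boundaries) such that
eventually `ZQ a = ZQ R₀ ⊔ ZP a` with constant intersection, and eventually
`BQ a = BQ A ⊔ BP a`, the differences of dimensions of cycles and of
cycles-∩-boundaries are eventually constant. -/
lemma abstract_stab {M : Type*} [AddCommGroup M] [Module (ZMod 2) M]
    (ZP ZQ BP BQ : ℝ → Submodule (ZMod 2) M)
    (hZPm : ∀ a b : ℝ, a ≤ b → ZP a ≤ ZP b) (hBPm : ∀ a b : ℝ, a ≤ b → BP a ≤ BP b)
    (fdZQ : ∀ a, FiniteDimensional (ZMod 2) (ZQ a))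
    (fdBQ : ∀ a, FiniteDimensional (ZMod 2) (BQ a))
    (fdZP : ∀ a, FiniteDimensional (ZMod 2) (ZP a))
    (fdBP : ∀ a, FiniteDimensional (ZMod 2) (BP a))
    (R₀ : ℝ) (hZdec : ∀ a, R₀ ≤ a → ZQ a = ZQ R₀ ⊔ ZP a)
    (hZinf : ∀ a, R₀ ≤ a → ZQ R₀ ⊓ ZP a = ZP R₀)
    (A : ℝ) (hBdec : ∀ a, A ≤ a → BQ a = BQ A ⊔ BP a) :
    ∃ R : ℝ, ∀ a₁ a₂ : ℝ, R ≤ a₁ → R ≤ a₂ →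
      ((Module.finrank (ZMod 2) ↥(ZQ a₁) : ℤ) - (Module.finrank (ZMod 2) ↥(ZP a₁) : ℤ)
        = (Module.finrank (ZMod 2) ↥(ZQ a₂) : ℤ)
          - (Module.finrank (ZMod 2) ↥(ZP a₂) : ℤ)) ∧
      ((Module.finrank (ZMod 2) ↥(ZQ a₁ ⊓ BQ a₁) : ℤ)
          - (Module.finrank (ZMod 2) ↥(ZP a₁ ⊓ BP a₁) : ℤ)
        = (Module.finrank (ZMod 2) ↥(ZQ a₂ ⊓ BQ a₂) : ℤ)
          - (Module.finrank (ZMod 2) ↥(ZP a₂ ⊓ BP a₂) : ℤ)) := by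
  haveI := fdZQ R₀
  haveI := fdBQ A
  obtain ⟨R₁, hR₁A, hstab₁⟩ := stab_submodule (BQ A) (fdBQ A) (fun a => BQ A ⊓ BP a)
      (fun a b hab => inf_le_inf_left _ (hBPm a b hab)) (fun a => inf_le_left) A
  obtain ⟨R₂, hR₂A, hstab₂⟩ := stab_submodule (ZQ R₀ ⊔ BQ A) inferInstance
      (fun a => (ZQ R₀ ⊔ BQ A) ⊓ (ZP a ⊔ BP a))
      (fun a b hab => inf_le_inf_left _ (sup_le_sup (hZPm a b hab) (hBPm a b hab)))
      (fun a => inf_le_left) A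
  have hstab₁' : ∀ a : ℝ, R₁ ≤ a → BQ A ⊓ BP a = BQ A ⊓ BP R₁ := fun a ha => hstab₁ a ha
  have hstab₂' : ∀ a : ℝ, R₂ ≤ a →
      (ZQ R₀ ⊔ BQ A) ⊓ (ZP a ⊔ BP a) = (ZQ R₀ ⊔ BQ A) ⊓ (ZP R₂ ⊔ BP R₂) :=
    fun a ha => hstab₂ a ha
  set R : ℝ := max R₀ (max R₁ R₂) with hRdef
  have hRR₀ : R₀ ≤ R := le_max_left _ _
  have hRR₁ : R₁ ≤ R := le_trans (le_max_left _ _) (le_max_right _ _)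
  have hRR₂ : R₂ ≤ R := le_trans (le_max_right _ _) (le_max_right _ _)
  have hRA : A ≤ R := hR₁A.trans hRR₁
  have core : ∀ a : ℝ, R ≤ a →
      (Module.finrank (ZMod 2) ↥(ZQ a) + Module.finrank (ZMod 2) ↥(ZP R₀)
        = Module.finrank (ZMod 2) ↥(ZQ R₀) + Module.finrank (ZMod 2) ↥(ZP a)) ∧
      (Module.finrank (ZMod 2) ↥(ZQ a ⊔ BQ a) + Module.finrank (ZMod 2) ↥(ZQ a ⊓ BQ a)
        = Module.finrank (ZMod 2) ↥(ZQ a) + Module.finrank (ZMod 2) ↥(BQ a)) ∧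
      (Module.finrank (ZMod 2) ↥(ZP a ⊔ BP a) + Module.finrank (ZMod 2) ↥(ZP a ⊓ BP a)
        = Module.finrank (ZMod 2) ↥(ZP a) + Module.finrank (ZMod 2) ↥(BP a)) ∧
      (Module.finrank (ZMod 2) ↥(BQ a) + Module.finrank (ZMod 2) ↥(BQ A ⊓ BP R₁)
        = Module.finrank (ZMod 2) ↥(BQ A) + Module.finrank (ZMod 2) ↥(BP a)) ∧
      (Module.finrank (ZMod 2) ↥(ZQ a ⊔ BQ a)
          + Module.finrank (ZMod 2) ↥((ZQ R₀ ⊔ BQ A) ⊓ (ZP R₂ ⊔ BP R₂))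
        = Module.finrank (ZMod 2) ↥(ZQ R₀ ⊔ BQ A)
          + Module.finrank (ZMod 2) ↥(ZP a ⊔ BP a)) := by
    intro a ha
    haveI := fdZP a; haveI := fdZQ a; haveI := fdBP a; haveI := fdBQ a
    haveI := fdZP R₀
    have haR₀ : R₀ ≤ a := hRR₀.trans ha
    have haR₁ : R₁ ≤ a := hRR₁.trans ha
    have haR₂ : R₂ ≤ a := hRR₂.trans ha
    have haA : A ≤ a := hRA.trans ha
    have e3 := Submodule.finrank_sup_add_finrank_inf_eq (ZQ R₀) (ZP a)
    rw [← hZdec a haR₀, hZinf a haR₀] at e3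
    have e1 := Submodule.finrank_sup_add_finrank_inf_eq (ZQ a) (BQ a)
    have e2 := Submodule.finrank_sup_add_finrank_inf_eq (ZP a) (BP a)
    have e4 := Submodule.finrank_sup_add_finrank_inf_eq (BQ A) (BP a)
    rw [← hBdec a haA, hstab₁' a haR₁] at e4
    have e5 := Submodule.finrank_sup_add_finrank_inf_eq (ZQ R₀ ⊔ BQ A) (ZP a ⊔ BP a)
    have hsupeq : (ZQ R₀ ⊔ BQ A) ⊔ (ZP a ⊔ BP a) = ZQ a ⊔ BQ a := by
      rw [sup_sup_sup_comm, ← hZdec a haR₀, ← hBdec a haA]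
    rw [hsupeq, hstab₂' a haR₂] at e5
    exact ⟨e3, e1, e2, e4, e5⟩
  refine ⟨R, fun a₁ a₂ h₁ h₂ => ?_⟩
  obtain ⟨p1, p2, p3, p4, p5⟩ := core a₁ h₁
  obtain ⟨q1, q2, q3, q4, q5⟩ := core a₂ h₂
  constructor <;> omega

/-- The weak stabilization statement for a single degree `q`. -/
lemma key_stab {d : ℕ}
    (Kx : ℝ → Set (Pt d) → Set (Finset (Pt d))) (hKx : Kx = cechCx d ∨ Kx = ripsCx d)
    (P Q : Set (Pt d)) (hP : ∀ x : Pt d, ¬ AccPt x (Filter.principal P))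
    (hQfin : Q.Finite) (z : Pt d) (L : ℝ) (hQL : Q ⊆ Metric.closedBall z L)
    (r s : ℝ) (hr : 0 ≤ r) (hrs : r ≤ s) (q : ℕ) :
    ∃ R : ℝ, ∀ a₁ a₂ : ℝ, R ≤ a₁ → R ≤ a₂ →
      ((Module.finrank (ZMod 2)
            ↥(cycleGroup (Kx r ((P ∪ Q) ∩ Metric.closedBall z a₁)) q) : ℤ) -
          (Module.finrank (ZMod 2)
            ↥(cycleGroup (Kx r (P ∩ Metric.closedBall z a₁)) q) : ℤ) =
        (Module.finrank (ZMod 2)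
            ↥(cycleGroup (Kx r ((P ∪ Q) ∩ Metric.closedBall z a₂)) q) : ℤ) -
          (Module.finrank (ZMod 2)
            ↥(cycleGroup (Kx r (P ∩ Metric.closedBall z a₂)) q) : ℤ)) ∧
      ((Module.finrank (ZMod 2)
            ↥(cycleGroup (Kx r ((P ∪ Q) ∩ Metric.closedBall z a₁)) q ⊓
              boundaryGroup (Kx s ((P ∪ Q) ∩ Metric.closedBall z a₁)) q) : ℤ) -
          (Module.finrank (ZMod 2)
            ↥(cycleGroup (Kx r (P ∩ Metric.closedBall z a₁)) q ⊓
              boundaryGroup (Kx s (P ∩ Metric.closedBall z a₁)) q) : ℤ) =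
        (Module.finrank (ZMod 2)
            ↥(cycleGroup (Kx r ((P ∪ Q) ∩ Metric.closedBall z a₂)) q ⊓
              boundaryGroup (Kx s ((P ∪ Q) ∩ Metric.closedBall z a₂)) q) : ℤ) -
          (Module.finrank (ZMod 2)
            ↥(cycleGroup (Kx r (P ∩ Metric.closedBall z a₂)) q ⊓
              boundaryGroup (Kx s (P ∩ Metric.closedBall z a₂)) q) : ℤ)) := by
  classical
  have hs0 : 0 ≤ s := hr.trans hrs
  -- basic facts about the complexes
  have Ksub : ∀ (u : ℝ) (S : Set (Pt d)) (σ : Finset (Pt d)), σ ∈ Kx u S → ↑σ ⊆ S := by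
    rcases hKx with rfl | rfl <;> exact fun u S σ h => h.1
  have Kmem : ∀ (u : ℝ) (S T : Set (Pt d)) (σ : Finset (Pt d)),
      σ ∈ Kx u S → ↑σ ⊆ T → σ ∈ Kx u T := by
    rcases hKx with rfl | rfl <;> exact fun u S T σ h hT => ⟨hT, h.2⟩
  have Kdist : ∀ (u : ℝ), u ≤ s → ∀ (S : Set (Pt d)) (σ : Finset (Pt d)), σ ∈ Kx u S →
      ∀ x ∈ σ, ∀ y ∈ σ, dist x y ≤ 2 * s := by
    rcases hKx with rfl | rfl
    · rintro u hu S σ ⟨-, -, w, hw⟩ x hx y hy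
      have hxw := Set.mem_iInter₂.1 hw x (Finset.mem_coe.2 hx)
      have hyw := Set.mem_iInter₂.1 hw y (Finset.mem_coe.2 hy)
      rw [Metric.mem_closedBall] at hxw hyw
      have h1 : dist x y ≤ dist x w + dist w y := dist_triangle x w y
      rw [dist_comm x w] at h1
      linarith
    · rintro u hu S σ ⟨-, -, hdiam⟩ x hx y hy
      have hb : Bornology.IsBounded (↑σ : Set (Pt d)) := σ.finite_toSet.isBounded
      have := Metric.dist_le_diam_of_mem hb (Finset.mem_coe.2 hx) (Finset.mem_coe.2 hy)
      linarith
  have Kmono : ∀ (u : ℝ) (S T : Set (Pt d)), S ⊆ T → Kx u S ⊆ Kx u T :=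
    fun u S T hST σ h => Kmem u S T σ h ((Ksub u S σ h).trans hST)
  set A : ℝ := L + 2 * s with hAdef
  -- geometric containment of simplices touching `Q`
  have hgeo : ∀ (u : ℝ), u ≤ s → ∀ (a : ℝ) (σ : Finset (Pt d)),
      σ ∈ Kx u ((P ∪ Q) ∩ Metric.closedBall z a) → ¬(↑σ ⊆ P) →
      σ ∈ Kx u ((P ∪ Q) ∩ Metric.closedBall z A) := by
    intro u hu a σ hσ hnP
    obtain ⟨y, hyσ, hyP⟩ := Set.not_subset.1 hnP
    have hy : y ∈ (P ∪ Q) ∩ Metric.closedBall z a := Ksub _ _ _ hσ hyσ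
    have hyQ : y ∈ Q := hy.1.resolve_left hyP
    have hyL : dist y z ≤ L := Metric.mem_closedBall.1 (hQL hyQ)
    apply Kmem _ _ _ _ hσ
    intro x hx
    have hx' := Ksub _ _ _ hσ hx
    refine ⟨hx'.1, ?_⟩
    have h1 : dist x y ≤ 2 * s :=
      Kdist u hu _ σ hσ x (Finset.mem_coe.1 hx) y (Finset.mem_coe.1 hyσ)
    have h2 : dist x z ≤ dist x y + dist y z := dist_triangle x y z
    rw [Metric.mem_closedBall, hAdef]
    linarith
  -- splitting of the complex on `P ∪ Q` for large radii
  have hsplit : ∀ (u : ℝ), u ≤ s → ∀ a : ℝ, A ≤ a →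
      Kx u ((P ∪ Q) ∩ Metric.closedBall z a)
        = Kx u (P ∩ Metric.closedBall z a) ∪ Kx u ((P ∪ Q) ∩ Metric.closedBall z A) := by
    intro u hu a ha
    apply Set.Subset.antisymm
    · intro σ hσ
      by_cases hsp : ↑σ ⊆ P
      · left
        apply Kmem _ _ _ _ hσ
        intro x hx
        exact ⟨hsp hx, (Ksub _ _ _ hσ hx).2⟩
      · exact Or.inr (hgeo u hu a σ hσ hsp)
    · apply Set.union_subset
      · exact Kmono _ _ _ (Set.inter_subset_inter_left _ Set.subset_union_left)
      · exact Kmono _ _ _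
          (Set.inter_subset_inter_right _ (Metric.closedBall_subset_closedBall ha))
  -- the submodule of chains supported on `P`
  set CPs : Submodule (ZMod 2) (Chain (Pt d)) :=
    Finsupp.supported (ZMod 2) (ZMod 2) {σ : Finset (Pt d) | ↑σ ⊆ P} with hCPsdef
  have hCP : ∀ (u a : ℝ) (m : ℕ),
      chainGroup (Kx u ((P ∪ Q) ∩ Metric.closedBall z a)) m ⊓ CPs
        = chainGroup (Kx u (P ∩ Metric.closedBall z a)) m := by
    intro u a m
    rw [chainGroup_eq_supported, chainGroup_eq_supported, hCPsdef, supported_inf_supported]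
    congr 1
    ext σ
    simp only [Set.mem_inter_iff, Set.mem_setOf_eq]
    constructor
    · rintro ⟨⟨h1, h2⟩, h3⟩
      refine ⟨Kmem _ _ _ _ h1 ?_, h2⟩
      intro x hx
      exact ⟨h3 hx, (Ksub _ _ _ h1 hx).2⟩
    · rintro ⟨h1, h2⟩
      exact ⟨⟨Kmem _ _ _ _ h1
        (fun x hx => ⟨Or.inl (Ksub _ _ _ h1 hx).1, (Ksub _ _ _ h1 hx).2⟩), h2⟩,
        fun x hx => (Ksub _ _ _ h1 hx).1⟩
  -- finiteness of the vertex sets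
  have hPfin : ∀ a : ℝ, (P ∩ Metric.closedBall z a).Finite := by
    intro a
    by_contra hinf
    obtain ⟨x, -, hx⟩ := Set.Infinite.exists_accPt_of_subset_isCompact hinf
      (isCompact_closedBall z a) Set.inter_subset_right
    exact hP x (hx.mono (Filter.principal_mono.2 Set.inter_subset_left))
  have hQPfin : ∀ a : ℝ, ((P ∪ Q) ∩ Metric.closedBall z a).Finite := by
    intro a
    apply Set.Finite.subset ((hPfin a).union hQfin)
    rintro x ⟨hx1 | hx1, hx2⟩
    · exact Or.inl ⟨hx1, hx2⟩
    · exact Or.inr hx1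
  -- the families
  set ZP : ℝ → Submodule (ZMod 2) (Chain (Pt d)) :=
    fun a => cycleGroup (Kx r (P ∩ Metric.closedBall z a)) q with hZPdef
  set ZQ : ℝ → Submodule (ZMod 2) (Chain (Pt d)) :=
    fun a => cycleGroup (Kx r ((P ∪ Q) ∩ Metric.closedBall z a)) q with hZQdef
  set BP : ℝ → Submodule (ZMod 2) (Chain (Pt d)) :=
    fun a => boundaryGroup (Kx s (P ∩ Metric.closedBall z a)) q with hBPdef
  set BQ : ℝ → Submodule (ZMod 2) (Chain (Pt d)) :=
    fun a => boundaryGroup (Kx s ((P ∪ Q) ∩ Metric.closedBall z a)) q with hBQdef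
  have hballm : ∀ (W : Set (Pt d)) (a b : ℝ), a ≤ b →
      W ∩ Metric.closedBall z a ⊆ W ∩ Metric.closedBall z b :=
    fun W a b h => Set.inter_subset_inter_right _ (Metric.closedBall_subset_closedBall h)
  have hZPm : ∀ a b : ℝ, a ≤ b → ZP a ≤ ZP b :=
    fun a b h => inf_le_inf_right _ (chainGroup_mono (Kmono _ _ _ (hballm P a b h)) q)
  have hZQm : ∀ a b : ℝ, a ≤ b → ZQ a ≤ ZQ b :=
    fun a b h => inf_le_inf_right _ (chainGroup_mono (Kmono _ _ _ (hballm (P ∪ Q) a b h)) q)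
  have hBPm : ∀ a b : ℝ, a ≤ b → BP a ≤ BP b :=
    fun a b h => Submodule.map_mono (chainGroup_mono (Kmono _ _ _ (hballm P a b h)) (q + 1))
  have hZPQ : ∀ a : ℝ, ZP a ≤ ZQ a :=
    fun a => inf_le_inf_right _ (chainGroup_mono
      (Kmono _ _ _ (Set.inter_subset_inter_left _ Set.subset_union_left)) q)
  -- finite-dimensionality
  have fdchainP : ∀ (u a : ℝ) (m : ℕ),
      FiniteDimensional (ZMod 2) (chainGroup (Kx u (P ∩ Metric.closedBall z a)) m) :=
    fun u a m => fd_chainGroup (hPfin a) (fun σ hσ => Ksub _ _ _ hσ) m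
  have fdchainQ : ∀ (u a : ℝ) (m : ℕ),
      FiniteDimensional (ZMod 2) (chainGroup (Kx u ((P ∪ Q) ∩ Metric.closedBall z a)) m) :=
    fun u a m => fd_chainGroup (hQPfin a) (fun σ hσ => Ksub _ _ _ hσ) m
  have fdZP : ∀ a, FiniteDimensional (ZMod 2) (ZP a) := fun a => by
    haveI := fdchainP r a q
    exact Submodule.finiteDimensional_of_le inf_le_left
  have fdZQ : ∀ a, FiniteDimensional (ZMod 2) (ZQ a) := fun a => by
    haveI := fdchainQ r a q
    exact Submodule.finiteDimensional_of_le inf_le_left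
  have fdBP : ∀ a, FiniteDimensional (ZMod 2) (BP a) := fun a => by
    haveI := fdchainP s a (q + 1)
    show FiniteDimensional (ZMod 2)
      (Submodule.map (bdry (Pt d)) (chainGroup (Kx s (P ∩ Metric.closedBall z a)) (q + 1)))
    infer_instance
  have fdBQ : ∀ a, FiniteDimensional (ZMod 2) (BQ a) := fun a => by
    haveI := fdchainQ s a (q + 1)
    show FiniteDimensional (ZMod 2)
      (Submodule.map (bdry (Pt d))
        (chainGroup (Kx s ((P ∪ Q) ∩ Metric.closedBall z a)) (q + 1)))
    infer_instance
  -- cycles of the `P ∪ Q` complex supported on `P` are cycles of the `P` complex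
  have hZQCP : ∀ a : ℝ, ZQ a ⊓ CPs = ZP a := by
    intro a
    show cycleGroup _ q ⊓ CPs = cycleGroup _ q
    unfold cycleGroup
    rw [inf_right_comm, hCP r a q]
  have hZPle : ∀ a : ℝ, ZP a ≤ CPs := by
    intro a
    refine le_trans inf_le_left ?_
    rw [chainGroup_eq_supported, hCPsdef]
    exact Finsupp.supported_mono (fun σ hσ x hx => ((Ksub _ _ _ hσ.1) hx).1)
  -- stabilization of the image of `ZQ` modulo chains supported on `P`
  set GA : Submodule (ZMod 2) (Chain (Pt d)) :=
    Finsupp.supported (ZMod 2) (ZMod 2)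
      {σ : Finset (Pt d) | ↑σ ⊆ (P ∪ Q) ∩ Metric.closedBall z A} with hGAdef
  have hCbound : ∀ a : ℝ,
      chainGroup (Kx r ((P ∪ Q) ∩ Metric.closedBall z a)) q ≤ CPs ⊔ GA := by
    intro a
    rw [chainGroup_eq_supported, hCPsdef, hGAdef, ← Finsupp.supported_union]
    apply Finsupp.supported_mono
    intro σ hσ
    by_cases hsp : ↑σ ⊆ P
    · exact Or.inl hsp
    · exact Or.inr (Ksub _ _ _ (hgeo r hrs a σ hσ.1 hsp))
  haveI fdGA : FiniteDimensional (ZMod 2) GA := fd_supported (finite_finsets (hQPfin A))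
  have hmapCP : Submodule.map CPs.mkQ CPs = ⊥ := by
    apply le_bot_iff.mp
    apply Submodule.map_le_iff_le_comap.mpr
    show CPs ≤ LinearMap.ker CPs.mkQ
    rw [Submodule.ker_mkQ]
  have hgle : ∀ a : ℝ, Submodule.map CPs.mkQ (ZQ a) ≤ Submodule.map CPs.mkQ GA := by
    intro a
    have h1 : Submodule.map CPs.mkQ (ZQ a)
        ≤ Submodule.map CPs.mkQ (CPs ⊔ GA) :=
      Submodule.map_mono (le_trans inf_le_left (hCbound a))
    rw [Submodule.map_sup, hmapCP, bot_sup_eq] at h1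
    exact h1
  obtain ⟨R₀, hR₀A, hstab₀⟩ := stab_submodule (Submodule.map CPs.mkQ GA) inferInstance
      (fun a => Submodule.map CPs.mkQ (ZQ a))
      (fun a b hab => Submodule.map_mono (hZQm a b hab)) hgle A
  have hstab₀' : ∀ a : ℝ, R₀ ≤ a →
      Submodule.map CPs.mkQ (ZQ a) = Submodule.map CPs.mkQ (ZQ R₀) :=
    fun a ha => hstab₀ a ha
  have hZdec : ∀ a : ℝ, R₀ ≤ a → ZQ a = ZQ R₀ ⊔ ZP a := by
    intro a ha
    apply le_antisymm
    · intro c hc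
      have hmem : CPs.mkQ c ∈ Submodule.map CPs.mkQ (ZQ R₀) := by
        rw [← hstab₀' a ha]
        exact Submodule.mem_map_of_mem hc
      obtain ⟨c₁, hc₁, hc₁eq⟩ := hmem
      have hsubm : c - c₁ ∈ CPs := by
        have h0 : CPs.mkQ (c - c₁) = 0 := by rw [map_sub, hc₁eq, sub_self]
        rwa [← LinearMap.mem_ker, Submodule.ker_mkQ] at h0
      have h2 : c - c₁ ∈ ZQ a := sub_mem hc (hZQm R₀ a ha hc₁)
      have h3 : c - c₁ ∈ ZP a := by
        have h4 : c - c₁ ∈ ZQ a ⊓ CPs := ⟨h2, hsubm⟩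
        rwa [hZQCP a] at h4
      have hcc : c = c₁ + (c - c₁) := by abel
      rw [hcc]
      exact add_mem (Submodule.mem_sup_left hc₁) (Submodule.mem_sup_right h3)
    · exact sup_le (hZQm R₀ a ha) (hZPQ a)
  have hZinf : ∀ a : ℝ, R₀ ≤ a → ZQ R₀ ⊓ ZP a = ZP R₀ := by
    intro a ha
    have h1 : CPs ⊓ ZP a = ZP a := inf_eq_right.2 (hZPle a)
    calc ZQ R₀ ⊓ ZP a = ZQ R₀ ⊓ (CPs ⊓ ZP a) := by rw [h1]
      _ = (ZQ R₀ ⊓ CPs) ⊓ ZP a := (inf_assoc _ _ _).symm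
      _ = ZP R₀ ⊓ ZP a := by rw [hZQCP R₀]
      _ = ZP R₀ := inf_eq_left.2 (hZPm R₀ a ha)
  -- decomposition of the boundary groups
  have hBdec : ∀ a : ℝ, A ≤ a → BQ a = BQ A ⊔ BP a := by
    intro a ha
    show boundaryGroup _ q = boundaryGroup _ q ⊔ boundaryGroup _ q
    unfold boundaryGroup
    rw [hsplit s le_rfl a ha, chainGroup_union, Submodule.map_sup, sup_comm]
  -- conclude via the abstract lemma
  obtain ⟨R, hR⟩ := abstract_stab ZP ZQ BP BQ hZPm hBPm fdZQ fdBQ fdZP fdBP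
    R₀ hZdec hZinf A hBdec
  exact ⟨R, hR⟩

lemma exists_ub_of_fun (f : ℕ → ℝ) (d : ℕ) : ∃ R : ℝ, ∀ q < d, f q ≤ R := by
  induction d with
  | zero => exact ⟨0, fun q hq => absurd hq (Nat.not_lt_zero q)⟩
  | succ n ih =>
    obtain ⟨R, hR⟩ := ih
    refine ⟨max R (f n), fun q hq => ?_⟩
    rcases Nat.lt_succ_iff_lt_or_eq.1 hq with h | h
    · exact le_trans (hR q h) (le_max_left _ _)
    · subst h; exact le_max_right _ _

/-- Existence of the radius of weak stabilization: let `P ⊆ ℝ^d` have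
no accumulation points and `Q` be a finite set contained in `B(z,L)`.  For each pair
`0 ≤ r ≤ s < ∞` there exists a finite `R` such that for all `a ≥ R` and all
`0 ≤ q ≤ d − 1`, both `dim Z_q(K'_{r,a}) − dim Z_q(K_{r,a})` and
`dim (Z_q(K'_{r,a}) ∩ B_q(K'_{s,a})) − dim (Z_q(K_{r,a}) ∩ B_q(K_{s,a}))` are constant
in `a`, where `K_{u,a} = K_u(P ∩ B(z,a))` and `K'_{u,a} = K_u((P ∪ Q) ∩ B(z,a))` for the
Čech or Rips filtration. -/
theorem exists_weak_stabilization_radius {d : ℕ}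
    (Kx : ℝ → Set (Pt d) → Set (Finset (Pt d))) (hKx : Kx = cechCx d ∨ Kx = ripsCx d)
    (P Q : Set (Pt d)) (hP : ∀ x : Pt d, ¬ AccPt x (Filter.principal P))
    (hQfin : Q.Finite) (z : Pt d) (L : ℝ) (hQL : Q ⊆ Metric.closedBall z L)
    (r s : ℝ) (hr : 0 ≤ r) (hrs : r ≤ s) :
    ∃ R : ℝ, ∀ q : ℕ, q < d → ∀ a₁ a₂ : ℝ, R ≤ a₁ → R ≤ a₂ →
      ((Module.finrank (ZMod 2)
            ↥(cycleGroup (Kx r ((P ∪ Q) ∩ Metric.closedBall z a₁)) q) : ℤ) -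
          (Module.finrank (ZMod 2)
            ↥(cycleGroup (Kx r (P ∩ Metric.closedBall z a₁)) q) : ℤ) =
        (Module.finrank (ZMod 2)
            ↥(cycleGroup (Kx r ((P ∪ Q) ∩ Metric.closedBall z a₂)) q) : ℤ) -
          (Module.finrank (ZMod 2)
            ↥(cycleGroup (Kx r (P ∩ Metric.closedBall z a₂)) q) : ℤ)) ∧
      ((Module.finrank (ZMod 2)
            ↥(cycleGroup (Kx r ((P ∪ Q) ∩ Metric.closedBall z a₁)) q ⊓
              boundaryGroup (Kx s ((P ∪ Q) ∩ Metric.closedBall z a₁)) q) : ℤ) -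
          (Module.finrank (ZMod 2)
            ↥(cycleGroup (Kx r (P ∩ Metric.closedBall z a₁)) q ⊓
              boundaryGroup (Kx s (P ∩ Metric.closedBall z a₁)) q) : ℤ) =
        (Module.finrank (ZMod 2)
            ↥(cycleGroup (Kx r ((P ∪ Q) ∩ Metric.closedBall z a₂)) q ⊓
              boundaryGroup (Kx s ((P ∪ Q) ∩ Metric.closedBall z a₂)) q) : ℤ) -
          (Module.finrank (ZMod 2)
            ↥(cycleGroup (Kx r (P ∩ Metric.closedBall z a₂)) q ⊓
              boundaryGroup (Kx s (P ∩ Metric.closedBall z a₂)) q) : ℤ)) := by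
  have key := fun q : ℕ => key_stab Kx hKx P Q hP hQfin z L hQL r s hr hrs q
  choose f hf using key
  obtain ⟨R, hR⟩ := exists_ub_of_fun f d
  exact ⟨R, fun q hq a₁ a₂ h₁ h₂ =>
    hf q a₁ a₂ ((hR q hq).trans h₁) ((hR q hq).trans h₂)⟩
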